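/- (Quasielliptic case.) Let ℓ ≥ 1 and m ≥ 2ℓ, and let φ ∈ C¹(ℝ²;ℝ) be (1,ℓ)-quasihomogeneous of degree m whose restriction φ̃ to the unit disto-circle S satisfies φ̃ ≥ μ on S for some μ > 0. Assume hypothesis (H1): for some C¹ regular 2π-periodic parametrization P of S, at least one of the two subsets {ϑ ∈ ℝ/2πℤ : (φ̃∘P)′(ϑ) ≥ 0} and {ϑ ∈ ℝ/2πℤ : (φ̃∘P)′(ϑ) ≤ 0} has finitely many connected components. Then φ satisfies the escape condition (H₊) with exponent m. -/

import Mathlib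

open MeasureTheory Real Set

noncomputable section

/-- `f_ℓ(σ) = σ|σ|^{ℓ-1}`. -/
def fl (l : ℝ) (σ : ℝ) : ℝ := σ * |σ| ^ (l - 1)

/-- The disto-scalar product `⟨v|w⟩_ℓ`. -/
def distoDot (l : ℝ) (v w : ℝ × ℝ) : ℝ := fl l v.1 * fl l w.1 + v.2 * w.2

/-- The distorted determinant `Δ_ℓ(v;w)`. -/
def distoDet (l : ℝ) (v w : ℝ × ℝ) : ℝ := fl l v.1 * w.2 - v.2 * fl l w.1

/-- The quasihomogeneous gauge `ρ(t,s)`. -/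
def qgauge (l : ℝ) (p : ℝ × ℝ) : ℝ := (|p.1| ^ (2 * l) + p.2 ^ 2) ^ (1 / (2 * l))

/-- The unit disto-circle `S`. -/
def distoCircle (l : ℝ) : Set (ℝ × ℝ) := {p | |p.1| ^ (2 * l) + p.2 ^ 2 = 1}

/-- The point of the disto-circle with angle parameter `ϑ` (image of the unit-circle
point of angle `ϑ` under the inverse of the dressing map). -/
def Pt (l ϑ : ℝ) : ℝ × ℝ := (fl (1 / l) (Real.cos ϑ), Real.sin ϑ)

/-- Euclidean distance in `ℝ²`. -/
def euclDist (v w : ℝ × ℝ) : ℝ := Real.sqrt ((v.1 - w.1) ^ 2 + (v.2 - w.2) ^ 2)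

/-- `φ` is `(1,ℓ)`-quasihomogeneous of degree `m`. -/
def Quasihom (l m : ℝ) (φ : ℝ × ℝ → ℝ) : Prop :=
  ∀ t s lam : ℝ, 0 < lam → φ (lam * t, lam ^ l * s) = lam ^ m * φ (t, s)

/-- Partial Fourier transform in the last variable `x`. -/
def fourierX (u : (ℝ × ℝ) × ℝ → ℂ) (ts : ℝ × ℝ) (ξ : ℝ) : ℂ :=
  ∫ x : ℝ, Complex.exp (-(Complex.I * x * ξ)) * u (ts, x)

/-- `L₁ u = ∂_t u + i (∂_t φ) ∂_x u`. -/
def Lop1 (φ : ℝ × ℝ → ℝ) (u : (ℝ × ℝ) × ℝ → ℂ) (p : (ℝ × ℝ) × ℝ) : ℂ :=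
  fderiv ℝ u p (((1 : ℝ), (0 : ℝ)), (0 : ℝ))
    + Complex.I * (fderiv ℝ φ p.1 ((1 : ℝ), (0 : ℝ)) : ℝ) * fderiv ℝ u p ((0 : ℝ × ℝ), (1 : ℝ))

/-- `L₂ u = ∂_s u + i (∂_s φ) ∂_x u`. -/
def Lop2 (φ : ℝ × ℝ → ℝ) (u : (ℝ × ℝ) × ℝ → ℂ) (p : (ℝ × ℝ) × ℝ) : ℂ :=
  fderiv ℝ u p (((0 : ℝ), (1 : ℝ)), (0 : ℝ))
    + Complex.I * (fderiv ℝ φ p.1 ((0 : ℝ), (1 : ℝ)) : ℝ) * fderiv ℝ u p ((0 : ℝ × ℝ), (1 : ℝ))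

/-- The system `(L₁,L₂)` attached to `φ` is microlocally `σ`-subelliptic in `{ξ > 0}`. -/
def MicrolocSubelliptic (φ : ℝ × ℝ → ℝ) (σ : ℝ) : Prop :=
  ∃ ω : Set (ℝ × ℝ), IsOpen ω ∧ ((0 : ℝ), (0 : ℝ)) ∈ ω ∧ Bornology.IsBounded ω ∧
    ∃ C > (0 : ℝ), ∀ u : (ℝ × ℝ) × ℝ → ℂ, ContDiff ℝ (⊤ : ℕ∞) u → HasCompactSupport u →
      (∀ p : (ℝ × ℝ) × ℝ, p.1 ∉ ω → u p = 0) →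
      (∫ q in ω ×ˢ Set.Ioi (0 : ℝ), q.2 ^ (2 * σ) * ‖fourierX u q.1 q.2‖ ^ 2)
        ≤ C * ∫ q in (Set.univ : Set (ℝ × ℝ)) ×ˢ Set.Ioi (0 : ℝ),
            (‖fourierX (Lop1 φ u) q.1 q.2‖ ^ 2 + ‖fourierX (Lop2 φ u) q.1 q.2‖ ^ 2)

/-- Jacobian determinant of a map `ℝ² → ℝ²` at a point. -/
def jac2 (F : ℝ × ℝ → ℝ × ℝ) (p : ℝ × ℝ) : ℝ :=
  (fderiv ℝ F p (1, 0)).1 * (fderiv ℝ F p (0, 1)).2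
    - (fderiv ℝ F p (1, 0)).2 * (fderiv ℝ F p (0, 1)).1

/-- The escape condition `(H₊)` with exponent `M` for `φ : ℝ² → ℝ`. -/
def EscapeCond (φ : ℝ × ℝ → ℝ) (M : ℝ) : Prop :=
  ∃ (ω ω' : Set (ℝ × ℝ)) (E : Set ((ℝ × ℝ) × ℝ)) (C₁ C₂ C₃ : ℝ)
    (γ : (ℝ × ℝ) → ℝ → ℝ × ℝ),
    IsOpen ω ∧ ((0 : ℝ), (0 : ℝ)) ∈ ω ∧ Bornology.IsBounded ω ∧
    ω' ⊆ ω ∧ MeasurableSet ω' ∧ volume (ω \ ω') = 0 ∧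
    E ⊆ ω' ×ˢ Set.Icc (0 : ℝ) 1 ∧ volume E = 0 ∧
    0 < C₁ ∧ 0 < C₂ ∧ 0 < C₃ ∧
    (∀ t ∈ ω', γ t 0 = t ∧ γ t 1 ∉ ω) ∧
    (∀ t ∈ ω', ∀ τ ∈ Set.Icc (0 : ℝ) 1, (t, τ) ∉ E →
      DifferentiableAt ℝ (γ t) τ ∧ ‖deriv (γ t) τ‖ ≤ C₂ ∧
      DifferentiableAt ℝ (fun t' => γ t' τ) t ∧
      1 / C₁ ≤ |jac2 (fun t' => γ t' τ) t|) ∧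
    (∀ t ∈ ω', ∀ τ ∈ Set.Icc (0 : ℝ) 1, τ ^ M / C₃ ≤ φ (γ t τ) - φ t)


/-- `A ⊆ ℝ` has finitely many connected components. -/
def FinitelyManyComponents (A : Set ℝ) : Prop :=
  Set.Finite ((fun x => connectedComponentIn A x) '' A)

/-- Hypothesis (H1): for some C¹ regular `2π`-periodic parametrization `P` of the
disto-circle, one of the sets `{(φ̃∘P)' ≥ 0}`, `{(φ̃∘P)' ≤ 0}` (within one period) has
finitely many connected components. -/
def HypH1 (l : ℝ) (φ : ℝ × ℝ → ℝ) : Prop :=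
  ∃ P : ℝ → ℝ × ℝ, ContDiff ℝ 1 P ∧ Function.Periodic P (2 * π) ∧
    (∀ ϑ : ℝ, deriv P ϑ ≠ 0) ∧ Set.range P = distoCircle l ∧
    (FinitelyManyComponents {ϑ ∈ Set.Icc 0 (2 * π) | 0 ≤ deriv (fun x => φ (P x)) ϑ} ∨
     FinitelyManyComponents {ϑ ∈ Set.Icc 0 (2 * π) | deriv (fun x => φ (P x)) ϑ ≤ 0})

def escMap (l : ℝ) (t : ℝ × ℝ) (τ : ℝ) : ℝ × ℝ :=
  ((1 + τ * (qgauge l t)⁻¹) * t.1, (1 + τ * (qgauge l t)⁻¹) ^ l * t.2)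

namespace QEaux

variable {l : ℝ}

lemma qA_nonneg (p : ℝ × ℝ) : 0 ≤ |p.1| ^ (2 * l) + p.2 ^ 2 :=
  add_nonneg (Real.rpow_nonneg (abs_nonneg _) _) (sq_nonneg _)

lemma qA_pos (hl : 1 ≤ l) (p : ℝ × ℝ) (hp : p ≠ 0) : 0 < |p.1| ^ (2 * l) + p.2 ^ 2 := by
  rcases eq_or_ne p.1 0 with h1 | h1
  · have h2 : p.2 ≠ 0 := by
      intro h2; exact hp (Prod.ext h1 h2)
    have := pow_pos (abs_pos.2 h2) 2
    rw [← sq_abs p.2] 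
    have := Real.rpow_nonneg (abs_nonneg p.1) (2*l)
    linarith
  · have : 0 < |p.1| ^ (2*l) := Real.rpow_pos_of_pos (abs_pos.2 h1) _
    nlinarith [sq_nonneg p.2]

lemma qgauge_nonneg (l : ℝ) (p : ℝ × ℝ) : 0 ≤ qgauge l p :=
  Real.rpow_nonneg (qA_nonneg p) _

lemma qgauge_pos (hl : 1 ≤ l) (p : ℝ × ℝ) (hp : p ≠ 0) : 0 < qgauge l p :=
  Real.rpow_pos_of_pos (qA_pos hl p hp) _

lemma qgauge_rpow (hl : 1 ≤ l) (p : ℝ × ℝ) :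
    qgauge l p ^ (2 * l) = |p.1| ^ (2 * l) + p.2 ^ 2 := by
  rw [qgauge, ← Real.rpow_mul (qA_nonneg p), one_div_mul_cancel (by positivity : (2:ℝ)*l ≠ 0),
    Real.rpow_one]

lemma qgauge_scale (hl : 1 ≤ l) (c : ℝ) (hc : 0 < c) (p : ℝ × ℝ) :
    qgauge l (c * p.1, c ^ l * p.2) = c * qgauge l p := by
  have h2l : ((2:ℝ) * l) ≠ 0 := by positivity
  have h1 : |c * p.1| ^ (2*l) = c ^ (2*l) * |p.1| ^ (2*l) := by
    rw [abs_mul, Real.mul_rpow (abs_nonneg _) (abs_nonneg _), abs_of_pos hc]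
  have h2 : (c ^ l * p.2) ^ 2 = c ^ (2*l) * p.2 ^ 2 := by
    have : (c ^ l) ^ 2 = c ^ (2*l) := by
      rw [← Real.rpow_two, ← Real.rpow_mul hc.le]; ring_nf
    rw [mul_pow, this]
  rw [qgauge, qgauge]
  simp only [h1, h2]
  rw [← mul_add, Real.mul_rpow (by positivity) (qA_nonneg p),
    ← Real.rpow_mul hc.le, mul_one_div, div_self h2l, Real.rpow_one]
  

lemma qgauge_continuous (hl : 1 ≤ l) : Continuous (qgauge l) := by
  have hA : Continuous (fun p : ℝ × ℝ => |p.1| ^ (2*l) + p.2 ^ 2) := by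
    apply Continuous.add
    · apply Continuous.rpow_const (continuous_abs.comp continuous_fst)
      intro p; right; positivity
    · exact (continuous_snd).pow 2
  exact hA.rpow_const (fun p => Or.inr (by positivity))

lemma abs_fst_le (hl : 1 ≤ l) (p : ℝ × ℝ) : |p.1| ≤ qgauge l p := by
  have h2l : (0:ℝ) < 2 * l := by positivity
  have h1 : |p.1| ^ (2*l) ≤ |p.1| ^ (2*l) + p.2^2 := by nlinarith [sq_nonneg p.2]
  have h2 : (|p.1| ^ (2*l)) ^ (1/(2*l)) ≤ (|p.1| ^ (2*l) + p.2^2) ^ (1/(2*l)) :=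
    Real.rpow_le_rpow (Real.rpow_nonneg (abs_nonneg _) _) h1 (by positivity)
  rwa [← Real.rpow_mul (abs_nonneg _), mul_one_div, div_self h2l.ne', Real.rpow_one] at h2

lemma abs_snd_le (hl : 1 ≤ l) (p : ℝ × ℝ) : |p.2| ≤ (qgauge l p) ^ l := by
  have h2l : (0:ℝ) < 2 * l := by positivity
  have h1 : p.2^2 ≤ |p.1| ^ (2*l) + p.2^2 := by
    nlinarith [Real.rpow_nonneg (abs_nonneg p.1) (2*l)]
  have h2 : (p.2^2) ^ (1/(2*l)*l) ≤ (|p.1| ^ (2*l) + p.2^2) ^ (1/(2*l)*l) := by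
    rw [Real.rpow_mul (sq_nonneg _), Real.rpow_mul (qA_nonneg p)]
    exact Real.rpow_le_rpow (Real.rpow_nonneg (sq_nonneg _) _)
      (Real.rpow_le_rpow (sq_nonneg _) h1 (by positivity)) (by linarith)
  have h3 : (p.2^2) ^ (1/(2*l)*l) = |p.2| := by
    rw [← sq_abs, ← Real.rpow_two, ← Real.rpow_mul (abs_nonneg _)]
    have : (2:ℝ) * (1/(2*l)*l) = 1 := by field_simp
    rw [this, Real.rpow_one]
  rw [qgauge, ← Real.rpow_mul (qA_nonneg p)]
  rw [h3] at h2; exact h2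

lemma theta_mem (hl : 1 ≤ l) (p : ℝ × ℝ) (hp : p ≠ 0) :
    |p.1 / qgauge l p| ^ (2*l) + (p.2 / (qgauge l p) ^ l) ^ 2 = 1 := by
  have hq : 0 < qgauge l p := qgauge_pos hl p hp
  have hql : 0 < (qgauge l p) ^ l := Real.rpow_pos_of_pos hq _
  have h1 : |p.1 / qgauge l p| ^ (2*l) = |p.1| ^ (2*l) / (qgauge l p) ^ (2*l) := by
    rw [abs_div, abs_of_pos hq, Real.div_rpow (abs_nonneg _) hq.le]
  have h2 : (p.2 / (qgauge l p) ^ l) ^ 2 = p.2 ^ 2 / (qgauge l p) ^ (2*l) := by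
    rw [div_pow]
    congr 1
    rw [← Real.rpow_two, ← Real.rpow_mul hq.le]; ring_nf
  rw [h1, h2, ← add_div, qgauge_rpow hl, div_self (qA_pos hl p hp).ne']


lemma hasDerivAt_abs_rpow (hl : 1 ≤ l) (x : ℝ) :
    HasDerivAt (fun x : ℝ => |x| ^ (2*l)) (2 * l * (x^2)^(l-1) * x) x := by
  have h : HasDerivAt (fun x : ℝ => (x^2)^l) ((l * (x^2)^(l-1)) * (2 * x^1)) x :=
    (Real.hasDerivAt_rpow_const (Or.inr hl)).comp x (hasDerivAt_pow 2 x)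
  have h2 : HasDerivAt (fun x : ℝ => (x^2)^l) (2 * l * (x^2)^(l-1) * x) x := by
    convert h using 1; ring
  convert h2 using 2 with y
  rw [Real.rpow_mul (abs_nonneg y), Real.rpow_two, sq_abs]

lemma hasFDerivAt_qgauge (hl : 1 ≤ l) (t : ℝ × ℝ) (ht : t ≠ 0) :
    HasFDerivAt (qgauge l)
      (((1/(2*l)) * (|t.1|^(2*l)+t.2^2) ^ (1/(2*l)-1)) •
        ((2*l*(t.1^2)^(l-1)*t.1) • ContinuousLinearMap.fst ℝ ℝ ℝ
          + (2*t.2) • ContinuousLinearMap.snd ℝ ℝ ℝ)) t := by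
  have hA : 0 < |t.1| ^ (2*l) + t.2^2 := qA_pos hl t ht
  have h1 : HasFDerivAt (fun p : ℝ × ℝ => |p.1| ^ (2*l))
      ((2*l*(t.1^2)^(l-1)*t.1) • ContinuousLinearMap.fst ℝ ℝ ℝ) t :=
    (hasDerivAt_abs_rpow hl t.1).comp_hasFDerivAt t hasFDerivAt_fst
  have h2 : HasFDerivAt (fun p : ℝ × ℝ => p.2 ^ 2)
      ((2*t.2) • ContinuousLinearMap.snd ℝ ℝ ℝ) t := by
    have := (hasDerivAt_pow 2 t.2).comp_hasFDerivAt t (hasFDerivAt_snd (𝕜 := ℝ) (E := ℝ) (F := ℝ))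
    norm_num at this
    exact this
  have hsum : HasFDerivAt (fun p : ℝ × ℝ => |p.1| ^ (2*l) + p.2^2)
      ((2*l*(t.1^2)^(l-1)*t.1) • ContinuousLinearMap.fst ℝ ℝ ℝ
        + (2*t.2) • ContinuousLinearMap.snd ℝ ℝ ℝ) t := h1.add h2
  exact (Real.hasDerivAt_rpow_const (Or.inl hA.ne')).comp_hasFDerivAt t hsum


lemma escMap_jac (hl : 1 ≤ l) (τ : ℝ) (hτ : 0 ≤ τ) (t : ℝ × ℝ) (ht : t ≠ 0) :
    DifferentiableAt ℝ (fun t' => escMap l t' τ) t ∧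
      jac2 (fun t' => escMap l t' τ) t = (1 + τ * (qgauge l t)⁻¹) ^ l := by
  have hq : 0 < qgauge l t := qgauge_pos hl t ht
  have hA : 0 < |t.1| ^ (2*l) + t.2^2 := qA_pos hl t ht
  set Q : ℝ × ℝ →L[ℝ] ℝ := ((1/(2*l)) * (|t.1|^(2*l)+t.2^2) ^ (1/(2*l)-1)) •
      ((2*l*(t.1^2)^(l-1)*t.1) • ContinuousLinearMap.fst ℝ ℝ ℝ
        + (2*t.2) • ContinuousLinearMap.snd ℝ ℝ ℝ) with hQdef
  have hQ : HasFDerivAt (qgauge l) Q t := hasFDerivAt_qgauge hl t ht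
  have hΛ : HasFDerivAt (fun t' => 1 + τ * (qgauge l t')⁻¹)
      (τ • ((-(qgauge l t ^ 2)⁻¹) • Q)) t :=
    (((hasDerivAt_inv hq.ne').comp_hasFDerivAt t hQ).const_mul τ).const_add 1
  set Λ : ℝ := 1 + τ * (qgauge l t)⁻¹ with hΛdef
  have hΛpos : 0 < Λ := by
    have : 0 ≤ τ * (qgauge l t)⁻¹ := by positivity
    rw [hΛdef]; linarith
  set D : ℝ × ℝ →L[ℝ] ℝ := τ • ((-(qgauge l t ^ 2)⁻¹) • Q) with hDdef
  have hF1 : HasFDerivAt (fun t' : ℝ × ℝ => (1 + τ * (qgauge l t')⁻¹) * t'.1)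
      (Λ • ContinuousLinearMap.fst ℝ ℝ ℝ + t.1 • D) t := hΛ.mul hasFDerivAt_fst
  have hpow : HasFDerivAt (fun t' : ℝ × ℝ => (1 + τ * (qgauge l t')⁻¹) ^ l)
      ((l * Λ ^ (l-1)) • D) t :=
    by have h := (Real.hasDerivAt_rpow_const (x := Λ) (p := l) (Or.inl hΛpos.ne')).comp_hasFDerivAt t hΛ; exact h
  have hF2 : HasFDerivAt (fun t' : ℝ × ℝ => (1 + τ * (qgauge l t')⁻¹) ^ l * t'.2)
      ((Λ ^ l) • ContinuousLinearMap.snd ℝ ℝ ℝ + t.2 • ((l * Λ ^ (l-1)) • D)) t :=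
    hpow.mul hasFDerivAt_snd
  have hF : HasFDerivAt (fun t' => escMap l t' τ)
      ((Λ • ContinuousLinearMap.fst ℝ ℝ ℝ + t.1 • D).prod
        ((Λ ^ l) • ContinuousLinearMap.snd ℝ ℝ ℝ + t.2 • ((l * Λ ^ (l-1)) • D))) t :=
    hF1.prodMk hF2
  refine ⟨hF.differentiableAt, ?_⟩
  rw [jac2, hF.fderiv]
  set u : ℝ := D (1, 0) with hudef
  set v : ℝ := D (0, 1) with hvdef
  have heval : ((Λ • ContinuousLinearMap.fst ℝ ℝ ℝ + t.1 • D).prod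
        ((Λ ^ l) • ContinuousLinearMap.snd ℝ ℝ ℝ + t.2 • ((l * Λ ^ (l-1)) • D))) (1,0)
      = (Λ + t.1 * u, t.2 * (l * Λ ^ (l-1) * u)) := by
    simp [ContinuousLinearMap.prod_apply, mul_comm, hudef]
  have heval2 : ((Λ • ContinuousLinearMap.fst ℝ ℝ ℝ + t.1 • D).prod
        ((Λ ^ l) • ContinuousLinearMap.snd ℝ ℝ ℝ + t.2 • ((l * Λ ^ (l-1)) • D))) (0,1)
      = (t.1 * v, Λ ^ l + t.2 * (l * Λ ^ (l-1) * v)) := by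
    simp [ContinuousLinearMap.prod_apply, mul_comm, hvdef]
  rw [heval, heval2]
  have hueq : u = -(τ * (qgauge l t ^ 2)⁻¹ *
      (((1/(2*l)) * (|t.1|^(2*l)+t.2^2) ^ (1/(2*l)-1)) * (2*l*(t.1^2)^(l-1)*t.1))) := by
    rw [hudef, hDdef, hQdef]; simp; ring
  have hveq : v = -(τ * (qgauge l t ^ 2)⁻¹ *
      (((1/(2*l)) * (|t.1|^(2*l)+t.2^2) ^ (1/(2*l)-1)) * (2*t.2))) := by
    rw [hvdef, hDdef, hQdef]; simp; ring
  -- key identity : t.1 * u + l * (t.2 * v) = -(τ / qgauge l t)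
  have hx2l : (t.1^2)^(l-1) * t.1^2 = (t.1^2)^l := by
    rcases eq_or_ne t.1 0 with h | h
    · simp [h]
      exact (Real.zero_rpow (by linarith : l ≠ 0)).symm
    · have hpos : (0:ℝ) < t.1^2 := by positivity
      calc (t.1^2)^(l-1) * t.1^2 = (t.1^2)^(l-1) * (t.1^2)^(1:ℝ) := by rw [Real.rpow_one]
        _ = (t.1^2)^(l-1+1) := (Real.rpow_add hpos _ _).symm
        _ = (t.1^2)^l := by ring_nf
  have habs : |t.1| ^ (2*l) = (t.1^2)^l := by
    rw [Real.rpow_mul (abs_nonneg _), Real.rpow_two, sq_abs]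
  rw [habs] at hueq hveq hA
  set A : ℝ := (t.1^2)^l + t.2^2 with hA2
  have hqA : A ^ (1/(2*l)) = qgauge l t := by rw [qgauge, habs]
  have hApow : A ^ (1/(2*l)-1) * A = qgauge l t := by
    calc A^(1/(2*l)-1) * A = A^(1/(2*l)-1) * A^(1:ℝ) := by rw [Real.rpow_one]
      _ = A^(1/(2*l)-1+1) := (Real.rpow_add hA _ _).symm
      _ = A^(1/(2*l)) := by ring_nf
      _ = qgauge l t := hqA
  have hc0 : 1/(2*l) * A ^ (1/(2*l)-1) * (2*l) = A ^ (1/(2*l)-1) := by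
    field_simp
  have hkey : t.1 * u + l * (t.2 * v) = -(τ * (qgauge l t)⁻¹) := by
    calc t.1 * u + l * (t.2 * v)
        = -(τ * (qgauge l t ^ 2)⁻¹ *
            ((1/(2*l) * A ^ (1/(2*l)-1) * (2*l)) * ((t.1^2)^(l-1)*t.1^2 + t.2^2))) := by
          rw [hueq, hveq]; ring
      _ = -(τ * (qgauge l t ^ 2)⁻¹ * (A ^ (1/(2*l)-1) * A)) := by
          rw [hc0, hx2l, ← hA2]
      _ = -(τ * (qgauge l t ^ 2)⁻¹ * qgauge l t) := by rw [hApow]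
      _ = -(τ * (qgauge l t)⁻¹) := by
          rw [sq]
          field_simp
  have hΛl : Λ^(l-1) * Λ = Λ^l := by
    calc Λ^(l-1) * Λ = Λ^(l-1) * Λ^(1:ℝ) := by rw [Real.rpow_one]
      _ = Λ^(l-1+1) := (Real.rpow_add hΛpos _ _).symm
      _ = Λ^l := by ring_nf
  linear_combination (l * t.2 * v) * hΛl + Λ^l * hkey + Λ^l * hΛdef


lemma escMap_deriv_tau (hl : 1 ≤ l) (t : ℝ × ℝ) (ht : t ≠ 0) (τ : ℝ) (hτ : 0 ≤ τ) :
    HasDerivAt (escMap l t)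
      ((qgauge l t)⁻¹ * t.1,
        l * (1 + τ * (qgauge l t)⁻¹) ^ (l-1) * (qgauge l t)⁻¹ * t.2) τ := by
  have hq : 0 < qgauge l t := qgauge_pos hl t ht
  have hΛpos : 0 < 1 + τ * (qgauge l t)⁻¹ := by
    have : 0 ≤ τ * (qgauge l t)⁻¹ := by positivity
    linarith
  have h1 : HasDerivAt (fun τ : ℝ => 1 + τ * (qgauge l t)⁻¹) (qgauge l t)⁻¹ τ := by
    simpa using ((hasDerivAt_id τ).mul_const (qgauge l t)⁻¹).const_add 1
  have hc1 := h1.mul_const t.1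
  have hpow : HasDerivAt (fun τ : ℝ => (1 + τ * (qgauge l t)⁻¹) ^ l)
      (l * (1 + τ * (qgauge l t)⁻¹) ^ (l-1) * (qgauge l t)⁻¹) τ :=
    by have h := (Real.hasDerivAt_rpow_const (x := 1 + τ * (qgauge l t)⁻¹) (p := l) (Or.inl hΛpos.ne')).comp τ h1; exact h
  have hc2 := hpow.mul_const t.2
  exact hc1.prodMk hc2


lemma rpow_superadd {a b mm : ℝ} (ha : 0 ≤ a) (hb : 0 ≤ b) (hm : 1 ≤ mm) :
    a ^ mm + b ^ mm ≤ (a + b) ^ mm := by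
  rcases eq_or_lt_of_le (add_nonneg ha hb) with h | h
  · have ha0 : a = 0 := by nlinarith
    have hb0 : b = 0 := by nlinarith
    simp [ha0, hb0, Real.zero_rpow (by linarith : mm ≠ 0)]
  have h1 : a ^ mm = a * a ^ (mm - 1) := by
    rw [← Real.rpow_one_add' ha (by intro hc; linarith)]; ring_nf
  have h2 : b ^ mm = b * b ^ (mm - 1) := by
    rw [← Real.rpow_one_add' hb (by intro hc; linarith)]; ring_nf
  have h3 : (a + b) ^ mm = (a + b) * (a + b) ^ (mm - 1) := by
    rw [← Real.rpow_one_add' (by linarith) (by intro hc; linarith)]; ring_nf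
  have h4 : a ^ (mm-1) ≤ (a+b) ^ (mm-1) := Real.rpow_le_rpow ha (by linarith) (by linarith)
  have h5 : b ^ (mm-1) ≤ (a+b) ^ (mm-1) := Real.rpow_le_rpow hb (by linarith) (by linarith)
  rw [h1, h2, h3]
  nlinarith [Real.rpow_nonneg (add_nonneg ha hb) (mm-1)]

end QEaux

/-- quasielliptic case: if `φ̃ ≥ μ > 0` on `S` and (H1) holds, then `φ`
satisfies the escape condition `(H₊)` with exponent `m`. -/
theorem quasielliptic_escape
    (l m : ℝ) (hl : 1 ≤ l) (hm : 2 * l ≤ m)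
    (φ : ℝ × ℝ → ℝ) (hφ : ContDiff ℝ 1 φ) (hqh : Quasihom l m φ)
    (μ : ℝ) (hμ : 0 < μ) (hpos : ∀ θ ∈ distoCircle l, μ ≤ φ θ)
    (hH1 : HypH1 l φ) :
    EscapeCond φ m := by
  classical
  open QEaux in
  have h2l : (0:ℝ) < 2 * l := by linarith
  have hm1 : (1:ℝ) ≤ m := by linarith
  set ω : Set (ℝ × ℝ) := {p | qgauge l p < 1} with hωdef
  have hωopen : IsOpen ω := by
    have : ω = qgauge l ⁻¹' Set.Iio 1 := rfl
    rw [this]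
    exact IsOpen.preimage (qgauge_continuous hl) isOpen_Iio
  have hlpos : (0:ℝ) < l := by linarith
  have hq0 : qgauge l ((0:ℝ), (0:ℝ)) = 0 := by
    simp [qgauge, Real.zero_rpow h2l.ne']
    exact Real.zero_rpow (by positivity)
  have hmemω : ∀ p ∈ ω, qgauge l p < 1 := fun p hp => hp
  refine ⟨ω, ω \ {((0:ℝ),(0:ℝ))}, ∅, 1, l * 2 ^ (l-1), μ⁻¹, escMap l,
    hωopen, ?_, ?_, Set.diff_subset, ?_, ?_, ?_, ?_, one_pos, ?_, ?_, ?_, ?_, ?_⟩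
  · show qgauge l ((0:ℝ),(0:ℝ)) < 1
    rw [hq0]; norm_num
  · -- bounded
    apply Bornology.IsBounded.subset (Metric.isBounded_closedBall (x := (0:ℝ×ℝ)) (r := 1))
    intro p hp
    have hq1 : qgauge l p < 1 := hp
    have h1 : |p.1| ≤ 1 := le_trans (abs_fst_le hl p) hq1.le
    have h2 : |p.2| ≤ 1 := by
      refine le_trans (abs_snd_le hl p) ?_
      exact Real.rpow_le_one (qgauge_nonneg l p) hq1.le (by linarith)
    simp only [Metric.mem_closedBall, dist_zero_right, Prod.norm_def, Real.norm_eq_abs]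
    exact max_le h1 h2
  · exact hωopen.measurableSet.diff (measurableSet_singleton _)
  · apply measure_mono_null (t := {((0:ℝ),(0:ℝ))})
    · intro p hp
      rcases hp with ⟨hp1, hp2⟩
      by_contra h
      exact hp2 ⟨hp1, h⟩
    · exact measure_singleton _
  · exact Set.empty_subset _
  · exact measure_empty
  · positivity
  · positivity
  · -- γ t 0 = t and γ t 1 ∉ ω
    rintro t ⟨htω, ht0⟩
    have ht : t ≠ 0 := by
      intro h; exact ht0 (by simp [h]; rfl)
    have hq : 0 < qgauge l t := qgauge_pos hl t ht
    constructor
    · show ((1 + 0 * (qgauge l t)⁻¹) * t.1, (1 + 0 * (qgauge l t)⁻¹) ^ l * t.2) = t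
      simp [Real.one_rpow]
    · show ¬ (qgauge l (escMap l t 1) < 1)
      have hc : (0:ℝ) < 1 + 1 * (qgauge l t)⁻¹ := by positivity
      have : qgauge l (escMap l t 1)
          = (1 + 1 * (qgauge l t)⁻¹) * qgauge l t := qgauge_scale hl _ hc t
      rw [this]
      have : (1 + 1 * (qgauge l t)⁻¹) * qgauge l t = qgauge l t + 1 := by
        field_simp
      rw [this]
      linarith
  · -- derivative conditions
    rintro t ⟨htω, ht0⟩ τ hτ _
    have ht : t ≠ 0 := by
      intro h; exact ht0 (by simp [h]; rfl)
    have hq : 0 < qgauge l t := qgauge_pos hl t ht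
    have hq1 : qgauge l t < 1 := htω
    have hτ0 := hτ.1
    have hτ1 := hτ.2
    have hΛpos : 0 < 1 + τ * (qgauge l t)⁻¹ := by
      have : 0 ≤ τ * (qgauge l t)⁻¹ := mul_nonneg hτ0 (inv_nonneg.2 hq.le)
      linarith
    have hd := escMap_deriv_tau hl t ht τ hτ0
    have hjac := escMap_jac hl τ hτ0 t ht
    have h2pow : (1:ℝ) ≤ 2 ^ (l-1) := by
      have := Real.rpow_le_rpow_of_exponent_le (one_le_two) (by linarith : (0:ℝ) ≤ l - 1)
      rwa [Real.rpow_zero] at this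
    refine ⟨hd.differentiableAt, ?_, hjac.1, ?_⟩
    · rw [hd.deriv]
      rw [Prod.norm_def]
      apply max_le
      · show ‖(qgauge l t)⁻¹ * t.1‖ ≤ l * 2 ^ (l-1)
        rw [Real.norm_eq_abs, abs_mul, abs_inv, abs_of_pos hq]
        have h1 : (qgauge l t)⁻¹ * |t.1| ≤ 1 := by
          rw [inv_mul_le_iff₀ hq]
          simpa using abs_fst_le hl t
        nlinarith
      · show ‖l * (1 + τ * (qgauge l t)⁻¹) ^ (l-1) * (qgauge l t)⁻¹ * t.2‖ ≤ l * 2 ^ (l-1)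
        rw [Real.norm_eq_abs]
        have hΛq : (1 + τ * (qgauge l t)⁻¹) * qgauge l t = qgauge l t + τ := by
          field_simp
        have h2 : (1 + τ * (qgauge l t)⁻¹) ^ (l-1) * (qgauge l t) ^ (l-1)
            = (qgauge l t + τ) ^ (l-1) := by
          rw [← Real.mul_rpow hΛpos.le hq.le, hΛq]
        have h3 : (qgauge l t + τ) ^ (l-1) ≤ 2 ^ (l-1) :=
          Real.rpow_le_rpow (by positivity) (by linarith) (by linarith)
        have h4 : (qgauge l t) ^ (l-1) = (qgauge l t) ^ l / qgauge l t :=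
          Real.rpow_sub_one hq.ne' l
        have h5 : |t.2| ≤ (qgauge l t) ^ l := abs_snd_le hl t
        have hnn : 0 ≤ l * (1 + τ * (qgauge l t)⁻¹) ^ (l-1) * (qgauge l t)⁻¹ :=
          mul_nonneg (mul_nonneg (by linarith) (Real.rpow_nonneg hΛpos.le _))
            (inv_nonneg.2 hq.le)
        calc |l * (1 + τ * (qgauge l t)⁻¹) ^ (l-1) * (qgauge l t)⁻¹ * t.2|
            = l * (1 + τ * (qgauge l t)⁻¹) ^ (l-1) * (qgauge l t)⁻¹ * |t.2| := by
              rw [abs_mul]; congr 1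
              rw [abs_of_nonneg hnn]
          _ ≤ l * (1 + τ * (qgauge l t)⁻¹) ^ (l-1) * (qgauge l t)⁻¹ * ((qgauge l t) ^ l) := by
              exact mul_le_mul_of_nonneg_left h5 hnn
          _ = l * ((1 + τ * (qgauge l t)⁻¹) ^ (l-1) * ((qgauge l t) ^ l / qgauge l t)) := by
              ring
          _ = l * ((1 + τ * (qgauge l t)⁻¹) ^ (l-1) * (qgauge l t) ^ (l-1)) := by rw [← h4]
          _ = l * (qgauge l t + τ) ^ (l-1) := by rw [h2]
          _ ≤ l * 2 ^ (l-1) := by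
              apply mul_le_mul_of_nonneg_left h3 (by linarith)
    · rw [hjac.2]
      have hΛ1 : (1:ℝ) ≤ 1 + τ * (qgauge l t)⁻¹ := by
        have : 0 ≤ τ * (qgauge l t)⁻¹ := by positivity
        linarith
      have : (1:ℝ) ≤ (1 + τ * (qgauge l t)⁻¹) ^ l := by
        have := Real.rpow_le_rpow (zero_le_one) hΛ1 (by linarith : (0:ℝ) ≤ l)
        rwa [Real.one_rpow] at this
      rw [abs_of_nonneg (by linarith)]
      linarith
  · -- escape inequality
    rintro t ⟨htω, ht0⟩ τ hτ
    have ht : t ≠ 0 := by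
      intro h; exact ht0 (by simp [h]; rfl)
    have hq : 0 < qgauge l t := qgauge_pos hl t ht
    have hql : 0 < (qgauge l t) ^ l := Real.rpow_pos_of_pos hq l
    have hτ0 := hτ.1
    have hΛpos : 0 < 1 + τ * (qgauge l t)⁻¹ := by
      have : 0 ≤ τ * (qgauge l t)⁻¹ := mul_nonneg hτ0 (inv_nonneg.2 hq.le)
      linarith
    set q : ℝ := qgauge l t with hqdef
    set Λ : ℝ := 1 + τ * q⁻¹ with hΛdef
    -- θ on the disto-circle
    have hθS : (t.1 / q, t.2 / q ^ l) ∈ distoCircle l := by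
      show |t.1 / q| ^ (2*l) + (t.2 / q ^ l) ^ 2 = 1
      exact theta_mem hl t ht
    have hφθ : μ ≤ φ (t.1 / q, t.2 / q ^ l) := hpos _ hθS
    have hφt : φ t = q ^ m * φ (t.1 / q, t.2 / q ^ l) := by
      have := hqh (t.1 / q) (t.2 / q ^ l) q hq
      rw [mul_div_cancel₀ _ hq.ne', mul_div_cancel₀ _ hql.ne'] at this
      rw [← this]
    have hφγ : φ (escMap l t τ) = Λ ^ m * φ t := by
      have := hqh t.1 t.2 Λ hΛpos
      rw [show ((t.1 : ℝ), (t.2 : ℝ)) = t from rfl] at this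
      exact this
    have hΛq : Λ * q = q + τ := by rw [hΛdef]; field_simp
    have h5 : Λ ^ m * q ^ m = (q + τ) ^ m := by
      rw [← Real.mul_rpow hΛpos.le hq.le, hΛq]
    have h6 : q ^ m + τ ^ m ≤ (q + τ) ^ m :=
      rpow_superadd hq.le hτ0 hm1
    have h8 : 0 < q ^ m := Real.rpow_pos_of_pos hq m
    have h9 : (1:ℝ) ≤ Λ ^ m := by
      have hΛ1 : (1:ℝ) ≤ Λ := by
        have : 0 ≤ τ * q⁻¹ := by positivity
        rw [hΛdef]; linarith
      have := Real.rpow_le_rpow (zero_le_one) hΛ1 (by linarith : (0:ℝ) ≤ m)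
      rwa [Real.one_rpow] at this
    have hdiv : τ ^ m / μ⁻¹ = τ ^ m * μ := by
      rw [div_eq_mul_inv, inv_inv]
    rw [hφγ, hφt, hdiv]
    nlinarith [mul_le_mul_of_nonneg_left hφθ (mul_nonneg (sub_nonneg.2 h9) h8.le),
      mul_le_mul_of_nonneg_left h6 hμ.le]


end
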